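/- arXiv:1705.05827 — 2 statements merged into one kernel-verified Lean document; each statement's English description precedes it below -/
import Mathlib

section
/- Let s ∈ G. In 2S(G;L,R), within the double coset ⟨L⟩s⟨R⟩, if kₛ is the minimum weak connection length for ⟨L⟩s⟨R⟩ (the minimum length of a word w purely in L or L⁻¹ with ws weakly connected to s, or purely in R or R⁻¹ with sw weakly connected to s) and kₛ is finite, then the double coset ⟨L⟩s⟨R⟩ consists of exactly kₛ weakly connected components of 2S(G;L,R), all of the same cardinality. -/
open Relation

/-- `w` is a product of a list of `n` elements of `S`. -/
def IsWord {G : Type*} [Group G] (S : Set G) (n : ℕ) (w : G) : Prop :=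
  ∃ l : List G, l.length = n ∧ (∀ x ∈ l, x ∈ S) ∧ l.prod = w

/-- The set of all positive-length words in `S`. -/
def WordSet {G : Type*} [Group G] (S : Set G) : Set G :=
  {w | ∃ n : ℕ, 0 < n ∧ IsWord S n w}

/-- Arc of the two-sided group digraph `2S(G;L,R)`. -/
def Arc {G : Type*} [Group G] (L R : Set G) (g h : G) : Prop :=
  ∃ l ∈ L, ∃ r ∈ R, h = l⁻¹ * g * r

/-- Existence of a directed path (possibly of length 0). -/
def DPath {G : Type*} [Group G] (L R : Set G) : G → G → Prop :=
  ReflTransGen (Arc L R)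

/-- Weak connectivity: path ignoring directions. -/
def WeakConn {G : Type*} [Group G] (L R : Set G) : G → G → Prop :=
  ReflTransGen (fun g h => Arc L R g h ∨ Arc L R h g)

/-- Strong connectivity of two vertices. -/
def StrongConn {G : Type*} [Group G] (L R : Set G) (g h : G) : Prop :=
  DPath L R g h ∧ DPath L R h g

section Aux
variable {G : Type*} [Group G] {L R : Set G}

lemma weakConn_symm {x y : G} (h : WeakConn L R x y) : WeakConn L R y x := by
  unfold WeakConn at h ⊢
  induction h with
  | refl => exact Relation.ReflTransGen.refl
  | tail _ hab ih => exact Relation.ReflTransGen.head hab.symm ih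

lemma weakConn_trans {x y z : G} (h : WeakConn L R x y) (h' : WeakConn L R y z) :
    WeakConn L R x z := Relation.ReflTransGen.trans h h'

lemma arc_fwd {l r : G} (hl : l ∈ L) (hr : r ∈ R) (x : G) :
    WeakConn L R x (l⁻¹ * x * r) :=
  Relation.ReflTransGen.single (Or.inl ⟨l, hl, r, hr, rfl⟩)

lemma arc_bwd {l r : G} (hl : l ∈ L) (hr : r ∈ R) (x : G) :
    WeakConn L R (l⁻¹ * x * r) x :=
  Relation.ReflTransGen.single (Or.inr ⟨l, hl, r, hr, rfl⟩)

lemma arc_fwd' {l r : G} (hl : l ∈ L) (hr : r ∈ R) (x : G) :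
    WeakConn L R x (l * x * r⁻¹) := by
  have h := arc_bwd hl hr (l * x * r⁻¹)
  have hx : l⁻¹ * (l * x * r⁻¹) * r = x := by group
  rwa [hx] at h

def Pgrp (L R : Set G) : Subgroup (G × G) :=
  Subgroup.closure {p : G × G | p.1 ∈ L ∧ p.2 ∈ R}

lemma weakConn_of_memP {p : G × G} (hp : p ∈ Pgrp L R) :
    ∀ x : G, WeakConn L R x (p.1⁻¹ * x * p.2) := by
  induction hp using Subgroup.closure_induction with
  | mem q hq => exact fun x => arc_fwd hq.1 hq.2 x
  | one => intro x; simpa [WeakConn] using (Relation.ReflTransGen.refl : WeakConn L R x x)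
  | mul q q' hq hq' ihq ihq' =>
      intro x
      have h1 := ihq x
      have h2 := ihq' (q.1⁻¹ * x * q.2)
      have e : (q * q').1⁻¹ * x * (q * q').2 = q'.1⁻¹ * (q.1⁻¹ * x * q.2) * q'.2 := by
        simp [mul_assoc]
      rw [e]; exact weakConn_trans h1 h2
  | inv q hq ihq =>
      intro x
      have h := ihq (q.1 * x * q.2⁻¹)
      have e : q.1⁻¹ * (q.1 * x * q.2⁻¹) * q.2 = x := by group
      rw [e] at h
      have e2 : (q⁻¹).1⁻¹ * x * (q⁻¹).2 = q.1 * x * q.2⁻¹ := by simp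
      rw [e2]; exact weakConn_symm h

lemma weakConn_of_memP' {a b : G} (h : ((a, b) : G × G) ∈ Pgrp L R) (x : G) :
    WeakConn L R x (a⁻¹ * x * b) := weakConn_of_memP h x

lemma memP_of_weakConn {x y : G} (h : WeakConn L R x y) :
    ∃ p ∈ Pgrp L R, y = p.1⁻¹ * x * p.2 := by
  induction h with
  | refl => exact ⟨1, one_mem _, by simp⟩
  | tail hxc hstep ih =>
      rename_i b c
      obtain ⟨p, hp, rfl⟩ := ih
      rcases hstep with ⟨l, hl, r, hr, rfl⟩ | ⟨l, hl, r, hr, heq⟩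
      · refine ⟨p * (l, r), mul_mem hp (Subgroup.subset_closure ⟨hl, hr⟩), ?_⟩
        simp [mul_assoc]
      · refine ⟨p * ((l, r) : G × G)⁻¹, mul_mem hp (inv_mem (Subgroup.subset_closure ⟨hl, hr⟩)), ?_⟩
        have hc : c = l * (p.1⁻¹ * x * p.2) * r⁻¹ := by rw [heq]; group
        simp only [Prod.fst_mul, Prod.snd_mul, Prod.fst_inv, Prod.snd_inv]
        rw [hc]; group
lemma conj_mem {l₀ r₀ : G} (hl₀ : l₀ ∈ L) (hr₀ : r₀ ∈ R) {p : G × G} (hp : p ∈ Pgrp L R) :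
    ((l₀ * p.1 * l₀⁻¹, p.2) : G × G) ∈ Pgrp L R ∧ ((l₀⁻¹ * p.1 * l₀, p.2) : G × G) ∈ Pgrp L R := by
  induction hp using Subgroup.closure_induction with
  | mem q hq =>
      obtain ⟨hq1, hq2⟩ := hq
      have hA : ((l₀, r₀) : G × G) ∈ Pgrp L R := Subgroup.subset_closure ⟨hl₀, hr₀⟩
      have hB : q ∈ Pgrp L R := Subgroup.subset_closure ⟨hq1, hq2⟩
      have hC : ((q.1, r₀) : G × G) ∈ Pgrp L R := Subgroup.subset_closure ⟨hq1, hr₀⟩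
      constructor
      · have e : ((l₀ * q.1 * l₀⁻¹, q.2) : G × G)
            = (l₀, r₀) * q * ((l₀, r₀) : G × G)⁻¹ * ((q.1, r₀) * q⁻¹ * ((q.1, r₀) : G × G)⁻¹ * q) := by
          ext <;> simp <;> group
        rw [e]
        exact mul_mem (mul_mem (mul_mem hA hB) (inv_mem hA))
          (mul_mem (mul_mem (mul_mem hC (inv_mem hB)) (inv_mem hC)) hB)
      · have e : ((l₀⁻¹ * q.1 * l₀, q.2) : G × G)
            = ((l₀, r₀) : G × G)⁻¹ * q * (l₀, r₀) * (((q.1, r₀) : G × G)⁻¹ * q⁻¹ * (q.1, r₀) * q) := by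
          ext <;> simp <;> group
        rw [e]
        exact mul_mem (mul_mem (mul_mem (inv_mem hA) hB) hA)
          (mul_mem (mul_mem (mul_mem (inv_mem hC) (inv_mem hB)) hC) hB)
  | one => constructor <;> · convert one_mem (Pgrp L R) using 1; ext <;> simp
  | mul a b ha hb iha ihb =>
      constructor
      · have e : ((l₀ * (a * b).1 * l₀⁻¹, (a * b).2) : G × G)
            = (l₀ * a.1 * l₀⁻¹, a.2) * (l₀ * b.1 * l₀⁻¹, b.2) := by
          ext <;> simp <;> group
        rw [e]; exact mul_mem iha.1 ihb.1
      · have e : ((l₀⁻¹ * (a * b).1 * l₀, (a * b).2) : G × G)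
            = (l₀⁻¹ * a.1 * l₀, a.2) * (l₀⁻¹ * b.1 * l₀, b.2) := by
          ext <;> simp <;> group
        rw [e]; exact mul_mem iha.2 ihb.2
  | inv a ha iha =>
      constructor
      · have e : ((l₀ * (a⁻¹).1 * l₀⁻¹, (a⁻¹).2) : G × G)
            = ((l₀ * a.1 * l₀⁻¹, a.2) : G × G)⁻¹ := by
          ext <;> simp <;> group
        rw [e]; exact inv_mem iha.1
      · have e : ((l₀⁻¹ * (a⁻¹).1 * l₀, (a⁻¹).2) : G × G)
            = ((l₀⁻¹ * a.1 * l₀, a.2) : G × G)⁻¹ := by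
          ext <;> simp <;> group
        rw [e]; exact inv_mem iha.2

lemma conj_zpow_mem {l₀ r₀ : G} (hl₀ : l₀ ∈ L) (hr₀ : r₀ ∈ R) (c : ℤ) {p : G × G}
    (hp : p ∈ Pgrp L R) : ((l₀ ^ c * p.1 * l₀ ^ (-c), p.2) : G × G) ∈ Pgrp L R := by
  induction c using Int.induction_on with
  | zero => simpa using hp
  | succ n ih =>
      have h := (conj_mem hl₀ hr₀ ih).1
      have e : ((l₀ ^ ((n : ℤ) + 1) * p.1 * l₀ ^ (-((n : ℤ) + 1)), p.2) : G × G)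
          = (l₀ * (l₀ ^ (n : ℤ) * p.1 * l₀ ^ (-(n : ℤ))) * l₀⁻¹, p.2) := by
        ext <;> simp <;> group
      rw [e]; exact h
  | pred n ih =>
      have h := (conj_mem hl₀ hr₀ ih).2
      have e : ((l₀ ^ (-(n : ℤ) - 1) * p.1 * l₀ ^ (-(-(n : ℤ) - 1)), p.2) : G × G)
          = (l₀⁻¹ * (l₀ ^ (-(n : ℤ)) * p.1 * l₀ ^ (-(-(n : ℤ)))) * l₀, p.2) := by
        ext <;> simp <;> group
      rw [e]; exact h

lemma transL {l₀ r₀ : G} (hl₀ : l₀ ∈ L) (hr₀ : r₀ ∈ R) (c : ℤ) {x y : G}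
    (h : WeakConn L R x y) : WeakConn L R (l₀ ^ c * x) (l₀ ^ c * y) := by
  obtain ⟨p, hp, rfl⟩ := memP_of_weakConn h
  have hq := conj_zpow_mem hl₀ hr₀ c hp
  have h2 := weakConn_of_memP' hq (l₀ ^ c * x)
  have e : (l₀ ^ c * p.1 * l₀ ^ (-c))⁻¹ * (l₀ ^ c * x) * p.2
      = l₀ ^ c * (p.1⁻¹ * x * p.2) := by group
  rwa [e] at h2
lemma stripL {l₀ r₀ : G} (hl₀ : l₀ ∈ L) (hr₀ : r₀ ∈ R) : ∀ (a : ℤ) (g : G),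
    WeakConn L R (l₀ ^ a * g) (g * r₀ ^ a) := by
  intro a
  induction a using Int.induction_on with
  | zero => intro g; simpa [WeakConn] using (Relation.ReflTransGen.refl : WeakConn L R g g)
  | succ n ih =>
      intro g
      have h1 : WeakConn L R (l₀ ^ ((n : ℤ) + 1) * g) (l₀ ^ (n : ℤ) * (g * r₀)) := by
        have h := arc_fwd hl₀ hr₀ (l₀ ^ ((n : ℤ) + 1) * g)
        have e : l₀⁻¹ * (l₀ ^ ((n : ℤ) + 1) * g) * r₀ = l₀ ^ (n : ℤ) * (g * r₀) := by group
        rwa [e] at h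
      have h2 := ih (g * r₀)
      have e2 : g * r₀ * r₀ ^ (n : ℤ) = g * r₀ ^ ((n : ℤ) + 1) := by group
      rw [e2] at h2
      exact weakConn_trans h1 h2
  | pred n ih =>
      intro g
      have h1 : WeakConn L R (l₀ ^ (-(n : ℤ) - 1) * g) (l₀ ^ (-(n : ℤ)) * (g * r₀⁻¹)) := by
        have h := arc_fwd' hl₀ hr₀ (l₀ ^ (-(n : ℤ) - 1) * g)
        have e : l₀ * (l₀ ^ (-(n : ℤ) - 1) * g) * r₀⁻¹ = l₀ ^ (-(n : ℤ)) * (g * r₀⁻¹) := by group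
        rwa [e] at h
      have h2 := ih (g * r₀⁻¹)
      have e2 : g * r₀⁻¹ * r₀ ^ (-(n : ℤ)) = g * r₀ ^ (-(n : ℤ) - 1) := by group
      rw [e2] at h2
      exact weakConn_trans h1 h2

lemma word_stripL {r₀ : G} (hr₀ : r₀ ∈ R) : ∀ (ls : List G), (∀ l ∈ ls, l ∈ L) → ∀ x : G,
    WeakConn L R (ls.prod * x) (x * r₀ ^ (ls.length : ℤ)) := by
  intro ls
  induction ls with
  | nil => intro _ x; simpa [WeakConn] using (Relation.ReflTransGen.refl : WeakConn L R x x)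
  | cons a t ih =>
      intro hmem x
      have ha : a ∈ L := hmem a (List.mem_cons_self)
      have h1 : WeakConn L R ((a :: t).prod * x) (t.prod * (x * r₀)) := by
        have h := arc_fwd ha hr₀ ((a :: t).prod * x)
        have e : a⁻¹ * ((a :: t).prod * x) * r₀ = t.prod * (x * r₀) := by
          rw [List.prod_cons]; group
        rwa [e] at h
      have h2 := ih (fun l hl => hmem l (List.mem_cons_of_mem a hl)) (x * r₀)
      have e2 : x * r₀ * r₀ ^ ((t.length : ℕ) : ℤ) = x * r₀ ^ (((a :: t).length : ℕ) : ℤ) := by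
        rw [List.length_cons]; push_cast; group
      rw [e2] at h2
      exact weakConn_trans h1 h2

lemma word_stripLinv {r₀ : G} (hr₀ : r₀ ∈ R) : ∀ (ls : List G), (∀ l ∈ ls, l ∈ L⁻¹) → ∀ x : G,
    WeakConn L R (ls.prod * x) (x * r₀ ^ (-(ls.length : ℤ))) := by
  intro ls
  induction ls with
  | nil => intro _ x; simpa [WeakConn] using (Relation.ReflTransGen.refl : WeakConn L R x x)
  | cons a t ih =>
      intro hmem x
      have ha : a⁻¹ ∈ L := by
        have := hmem a (List.mem_cons_self); rwa [Set.mem_inv] at this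
      have h1 : WeakConn L R ((a :: t).prod * x) (t.prod * (x * r₀⁻¹)) := by
        have h := arc_bwd ha hr₀ (t.prod * (x * r₀⁻¹))
        have e : a⁻¹⁻¹ * (t.prod * (x * r₀⁻¹)) * r₀ = (a :: t).prod * x := by
          rw [List.prod_cons]; group
        rwa [e] at h
      have h2 := ih (fun l hl => hmem l (List.mem_cons_of_mem a hl)) (x * r₀⁻¹)
      have e2 : x * r₀⁻¹ * r₀ ^ (-((t.length : ℕ) : ℤ)) = x * r₀ ^ (-(((a :: t).length : ℕ) : ℤ)) := by
        rw [List.length_cons]; push_cast; group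
      rw [e2] at h2
      exact weakConn_trans h1 h2

lemma word_stripR {l₀ r₀ : G} (hl₀ : l₀ ∈ L) (hr₀ : r₀ ∈ R) :
    ∀ (ls : List G), (∀ r ∈ ls, r ∈ R) → ∀ x : G,
    WeakConn L R (x * ls.prod) (l₀ ^ (ls.length : ℤ) * x) := by
  intro ls
  induction ls with
  | nil => intro _ x; simpa [WeakConn] using (Relation.ReflTransGen.refl : WeakConn L R x x)
  | cons a t ih =>
      intro hmem x
      have ha : a ∈ R := hmem a (List.mem_cons_self)
      have h1 : WeakConn L R (x * (a :: t).prod) (l₀ ^ ((t.length : ℕ) : ℤ) * (x * a)) := by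
        have h := ih (fun r hr => hmem r (List.mem_cons_of_mem a hr)) (x * a)
        have e : x * a * t.prod = x * (a :: t).prod := by rw [List.prod_cons]; group
        rwa [e] at h
      have hstep : WeakConn L R (x * a) (l₀ * x) := by
        have h := arc_bwd hl₀ ha (l₀ * x)
        have e : l₀⁻¹ * (l₀ * x) * a = x * a := by group
        rwa [e] at h
      have h2 := transL hl₀ hr₀ ((t.length : ℕ) : ℤ) hstep
      have e2 : l₀ ^ ((t.length : ℕ) : ℤ) * (l₀ * x) = l₀ ^ (((a :: t).length : ℕ) : ℤ) * x := by
        rw [List.length_cons]; push_cast; group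
      rw [e2] at h2
      exact weakConn_trans h1 h2

lemma word_stripRinv {l₀ r₀ : G} (hl₀ : l₀ ∈ L) (hr₀ : r₀ ∈ R) :
    ∀ (ls : List G), (∀ r ∈ ls, r ∈ R⁻¹) → ∀ x : G,
    WeakConn L R (x * ls.prod) (l₀ ^ (-(ls.length : ℤ)) * x) := by
  intro ls
  induction ls with
  | nil => intro _ x; simpa [WeakConn] using (Relation.ReflTransGen.refl : WeakConn L R x x)
  | cons a t ih =>
      intro hmem x
      have ha : a⁻¹ ∈ R := by
        have := hmem a (List.mem_cons_self); rwa [Set.mem_inv] at this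
      have h1 : WeakConn L R (x * (a :: t).prod) (l₀ ^ (-((t.length : ℕ) : ℤ)) * (x * a)) := by
        have h := ih (fun r hr => hmem r (List.mem_cons_of_mem a hr)) (x * a)
        have e : x * a * t.prod = x * (a :: t).prod := by rw [List.prod_cons]; group
        rwa [e] at h
      have hstep : WeakConn L R (x * a) (l₀⁻¹ * x) := by
        have h := arc_fwd hl₀ ha (x * a)
        have e : l₀⁻¹ * (x * a) * a⁻¹ = l₀⁻¹ * x := by group
        rwa [e] at h
      have h2 := transL hl₀ hr₀ (-((t.length : ℕ) : ℤ)) hstep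
      have e2 : l₀ ^ (-((t.length : ℕ) : ℤ)) * (l₀⁻¹ * x)
          = l₀ ^ (-(((a :: t).length : ℕ) : ℤ)) * x := by
        rw [List.length_cons]; push_cast; group
      rw [e2] at h2
      exact weakConn_trans h1 h2
lemma classEq {g g' : G} (h : WeakConn L R g g') :
    {h' | WeakConn L R g h'} = {h' | WeakConn L R g' h'} := by
  ext x
  exact ⟨fun hx => weakConn_trans (weakConn_symm h) hx, fun hx => weakConn_trans h hx⟩

lemma memD_of_weakConn (s : G) {x y : G} (h : WeakConn L R x y)
    (hx : ∃ u ∈ Subgroup.closure L, ∃ v ∈ Subgroup.closure R, x = u * s * v) :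
    ∃ u ∈ Subgroup.closure L, ∃ v ∈ Subgroup.closure R, y = u * s * v := by
  induction h with
  | refl => exact hx
  | tail hxb hstep ih =>
      rename_i b c
      obtain ⟨u, hu, v, hv, rfl⟩ := ih
      rcases hstep with ⟨l, hl, r, hr, rfl⟩ | ⟨l, hl, r, hr, heq⟩
      · exact ⟨l⁻¹ * u, mul_mem (inv_mem (Subgroup.subset_closure hl)) hu,
          v * r, mul_mem hv (Subgroup.subset_closure hr), by group⟩
      · refine ⟨l * u, mul_mem (Subgroup.subset_closure hl) hu,
          v * r⁻¹, mul_mem hv (inv_mem (Subgroup.subset_closure hr)), ?_⟩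
        have hc : c = l * (u * s * v) * r⁻¹ := by rw [heq]; group
        rw [hc]; group

lemma exists_normal {l₀ r₀ : G} (hl₀ : l₀ ∈ L) (hr₀ : r₀ ∈ R) (s g : G)
    (hg : ∃ u ∈ Subgroup.closure L, ∃ v ∈ Subgroup.closure R, g = u * s * v) :
    ∃ m : ℤ, WeakConn L R g (l₀ ^ m * s) := by
  obtain ⟨u, hu, v, hv, rfl⟩ := hg
  have hA : ∀ u' : G, u' ∈ Subgroup.closure L →
      ∃ m : ℤ, ∀ x : G, WeakConn L R (u' * x) (x * r₀ ^ m) := by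
    intro u' hu'
    induction hu' using Subgroup.closure_induction with
    | mem l hl =>
        refine ⟨1, fun x => ?_⟩
        have h := arc_fwd hl hr₀ (l * x)
        have e : l⁻¹ * (l * x) * r₀ = x * r₀ ^ (1 : ℤ) := by group
        rwa [e] at h
    | one => exact ⟨0, fun x => by simpa [WeakConn] using (Relation.ReflTransGen.refl : WeakConn L R x x)⟩
    | mul a b ha hb iha ihb =>
        obtain ⟨m, hm⟩ := iha
        obtain ⟨n, hn⟩ := ihb
        refine ⟨m + n, fun x => ?_⟩
        have h1 := hm (b * x)
        have h2 := hn (x * r₀ ^ m)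
        have e1 : a * b * x = a * (b * x) := by group
        have e2 : b * x * r₀ ^ m = b * (x * r₀ ^ m) := by group
        have e3 : x * r₀ ^ m * r₀ ^ n = x * r₀ ^ (m + n) := by group
        rw [← e2, e3] at h2
        rw [e1]
        exact weakConn_trans h1 h2
    | inv a ha iha =>
        obtain ⟨m, hm⟩ := iha
        refine ⟨-m, fun x => ?_⟩
        have h := hm (a⁻¹ * (x * r₀ ^ (-m)))
        have e1 : a * (a⁻¹ * (x * r₀ ^ (-m))) = x * r₀ ^ (-m) := by group
        have e2 : a⁻¹ * (x * r₀ ^ (-m)) * r₀ ^ m = a⁻¹ * x := by group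
        rw [e1, e2] at h
        exact weakConn_symm h
  have hB : ∀ v' : G, v' ∈ Subgroup.closure R →
      ∃ n : ℤ, ∀ x : G, WeakConn L R (x * v') (l₀ ^ n * x) := by
    intro v' hv'
    induction hv' using Subgroup.closure_induction with
    | mem r hr =>
        refine ⟨1, fun x => ?_⟩
        have h := arc_bwd hl₀ hr (l₀ * x)
        have e : l₀⁻¹ * (l₀ * x) * r = x * r := by group
        rw [e] at h
        have e2 : l₀ * x = l₀ ^ (1 : ℤ) * x := by group
        rwa [e2] at h
    | one => exact ⟨0, fun x => by simpa [WeakConn] using (Relation.ReflTransGen.refl : WeakConn L R x x)⟩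
    | mul a b ha hb iha ihb =>
        obtain ⟨m, hm⟩ := iha
        obtain ⟨n, hn⟩ := ihb
        refine ⟨n + m, fun x => ?_⟩
        have h1 := hn (x * a)
        have e1 : x * a * b = x * (a * b) := by group
        rw [e1] at h1
        have h2 := transL hl₀ hr₀ n (hm x)
        have e2 : l₀ ^ n * (l₀ ^ m * x) = l₀ ^ (n + m) * x := by group
        rw [e2] at h2
        exact weakConn_trans h1 h2
    | inv a ha iha =>
        obtain ⟨m, hm⟩ := iha
        refine ⟨-m, fun x => ?_⟩
        have h := hm (l₀ ^ (-m) * (x * a⁻¹))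
        have e1 : l₀ ^ (-m) * (x * a⁻¹) * a = l₀ ^ (-m) * x := by group
        have e2 : l₀ ^ m * (l₀ ^ (-m) * (x * a⁻¹)) = x * a⁻¹ := by group
        rw [e1, e2] at h
        exact weakConn_symm h
  obtain ⟨m, hm⟩ := hA u hu
  have hvr : v * r₀ ^ m ∈ Subgroup.closure R :=
    mul_mem hv (zpow_mem (Subgroup.subset_closure hr₀) m)
  obtain ⟨n, hn⟩ := hB (v * r₀ ^ m) hvr
  refine ⟨n, ?_⟩
  have h1 := hm (s * v)
  have e1 : u * s * v = u * (s * v) := by group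
  rw [e1]
  have h2 := hn s
  have e2 : s * (v * r₀ ^ m) = s * v * r₀ ^ m := by group
  rw [e2] at h2
  exact weakConn_trans h1 h2

end Aux

theorem stmt_13 {G : Type*} [Group G] (L R : Set G) (hL : L.Nonempty) (hR : R.Nonempty)
    (s : G) (k : ℕ)
    (hk : IsLeast {n : ℕ | 0 < n ∧
        ((∃ w : G, (IsWord L n w ∨ IsWord L⁻¹ n w) ∧ WeakConn L R (w * s) s) ∨
         (∃ w : G, (IsWord R n w ∨ IsWord R⁻¹ n w) ∧ WeakConn L R (s * w) s))} k) :
    Nonempty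
      ({C : Set G | ∃ g : G, (∃ u ∈ Subgroup.closure L, ∃ v ∈ Subgroup.closure R,
          g = u * s * v) ∧ C = {h | WeakConn L R g h}} ≃ Fin k) ∧
    (⋃₀ {C : Set G | ∃ g : G, (∃ u ∈ Subgroup.closure L, ∃ v ∈ Subgroup.closure R,
          g = u * s * v) ∧ C = {h | WeakConn L R g h}} =
      {x : G | ∃ u ∈ Subgroup.closure L, ∃ v ∈ Subgroup.closure R, x = u * s * v}) ∧
    ∀ C ∈ {C : Set G | ∃ g : G, (∃ u ∈ Subgroup.closure L, ∃ v ∈ Subgroup.closure R,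
          g = u * s * v) ∧ C = {h | WeakConn L R g h}},
      ∀ D ∈ {C : Set G | ∃ g : G, (∃ u ∈ Subgroup.closure L, ∃ v ∈ Subgroup.closure R,
          g = u * s * v) ∧ C = {h | WeakConn L R g h}},
        Nonempty (C ≃ D) := by
  obtain ⟨l₀, hl₀⟩ := hL
  obtain ⟨r₀, hr₀⟩ := hR
  have kpos : 0 < k := hk.1.1
  -- closure properties of Z = {m | l₀^m s ~ s}
  have Zadd : ∀ m n : ℤ, WeakConn L R (l₀ ^ m * s) s → WeakConn L R (l₀ ^ n * s) s →
      WeakConn L R (l₀ ^ (m + n) * s) s := by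
    intro m n hm hn
    have h1 := transL hl₀ hr₀ m hn
    have e : l₀ ^ m * (l₀ ^ n * s) = l₀ ^ (m + n) * s := by group
    rw [e] at h1
    exact weakConn_trans h1 hm
  have Zneg : ∀ m : ℤ, WeakConn L R (l₀ ^ m * s) s → WeakConn L R (l₀ ^ (-m) * s) s := by
    intro m hm
    have h1 := transL hl₀ hr₀ (-m) hm
    have e : l₀ ^ (-m) * (l₀ ^ m * s) = s := by group
    rw [e] at h1
    exact weakConn_symm h1
  have Zk : WeakConn L R (l₀ ^ (k : ℤ) * s) s := by
    rcases hk.1.2 with ⟨w, hw, hws⟩ | ⟨w, hw, hws⟩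
    · rcases hw with ⟨ls, hlen, hmem, rfl⟩ | ⟨ls, hlen, hmem, rfl⟩
      · have h1 := word_stripL hr₀ ls hmem s
        have h2 := stripL hl₀ hr₀ (k : ℤ) s
        rw [hlen] at h1
        exact weakConn_trans h2 (weakConn_trans (weakConn_symm h1) hws)
      · have h1 := word_stripLinv hr₀ ls hmem s
        have h2 := stripL hl₀ hr₀ (-(k : ℤ)) s
        rw [hlen] at h1
        have h3 : WeakConn L R (l₀ ^ (-(k : ℤ)) * s) s :=
          weakConn_trans h2 (weakConn_trans (weakConn_symm h1) hws)
        have h4 := Zneg _ h3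
        rwa [neg_neg] at h4
    · rcases hw with ⟨ls, hlen, hmem, rfl⟩ | ⟨ls, hlen, hmem, rfl⟩
      · have h1 := word_stripR hl₀ hr₀ ls hmem s
        rw [hlen] at h1
        exact weakConn_trans (weakConn_symm h1) hws
      · have h1 := word_stripRinv hl₀ hr₀ ls hmem s
        rw [hlen] at h1
        have h3 := weakConn_trans (weakConn_symm h1) hws
        have h4 := Zneg _ h3
        rwa [neg_neg] at h4
  have Zmul : ∀ c : ℤ, WeakConn L R (l₀ ^ (c * (k : ℤ)) * s) s := by
    intro c
    induction c using Int.induction_on with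
    | zero => simpa [WeakConn] using (Relation.ReflTransGen.refl : WeakConn L R s s)
    | succ n ih =>
        have := Zadd _ _ ih Zk
        rwa [show (n : ℤ) * k + k = ((n : ℤ) + 1) * k by ring] at this
    | pred n ih =>
        have := Zadd _ _ ih (Zneg _ Zk)
        rwa [show (-(n : ℤ)) * k + -(k : ℤ) = (-(n : ℤ) - 1) * k by ring] at this
  have Zdvd : ∀ m : ℤ, WeakConn L R (l₀ ^ m * s) s → (k : ℤ) ∣ m := by
    intro m hm
    have hkne : (k : ℤ) ≠ 0 := by exact_mod_cast kpos.ne'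
    have hmod : WeakConn L R (l₀ ^ (m % (k : ℤ)) * s) s := by
      have h1 := Zneg _ (Zmul (m / (k : ℤ)))
      have h2 := Zadd _ _ hm h1
      rwa [show m + -(m / (k : ℤ) * (k : ℤ)) = m % (k : ℤ) by rw [Int.emod_def]; ring] at h2
    by_cases h0 : m % (k : ℤ) = 0
    · exact Int.dvd_of_emod_eq_zero h0
    · exfalso
      have hge : 0 ≤ m % (k : ℤ) := Int.emod_nonneg m hkne
      have hlt : m % (k : ℤ) < k := Int.emod_lt_of_pos m (by exact_mod_cast kpos)
      have hcast : (((m % (k : ℤ)).toNat : ℕ) : ℤ) = m % (k : ℤ) := Int.toNat_of_nonneg hge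
      have hmemset : (m % (k : ℤ)).toNat ∈ {n : ℕ | 0 < n ∧
          ((∃ w : G, (IsWord L n w ∨ IsWord L⁻¹ n w) ∧ WeakConn L R (w * s) s) ∨
           (∃ w : G, (IsWord R n w ∨ IsWord R⁻¹ n w) ∧ WeakConn L R (s * w) s))} := by
        constructor
        · omega
        · left
          refine ⟨l₀ ^ (m % (k : ℤ)).toNat,
            Or.inl ⟨List.replicate (m % (k : ℤ)).toNat l₀, List.length_replicate,
              fun x hx => by rw [List.eq_of_mem_replicate hx]; exact hl₀,
              List.prod_replicate _ _⟩, ?_⟩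
          have e : (l₀ : G) ^ (m % (k : ℤ)).toNat = l₀ ^ (m % (k : ℤ)) := by
            rw [← zpow_natCast, hcast]
          rw [e]
          exact hmod
      have := hk.2 hmemset
      omega
  -- congruence ⇒ connected
  have hcong : ∀ m n : ℤ, (k : ℤ) ∣ (m - n) → WeakConn L R (l₀ ^ m * s) (l₀ ^ n * s) := by
    intro m n ⟨c, hc⟩
    have h1 : WeakConn L R (l₀ ^ (m - n) * s) s := by
      have h := Zmul c
      rwa [show c * (k : ℤ) = m - n by rw [mul_comm]; exact hc.symm] at h
    have h2 := transL hl₀ hr₀ n h1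
    have e1 : l₀ ^ n * (l₀ ^ (m - n) * s) = l₀ ^ m * s := by group
    rwa [e1] at h2
  have hdvd2 : ∀ m n : ℤ, WeakConn L R (l₀ ^ m * s) (l₀ ^ n * s) → (k : ℤ) ∣ (m - n) := by
    intro m n h
    have h1 := transL hl₀ hr₀ (-n) h
    have e1 : l₀ ^ (-n) * (l₀ ^ m * s) = l₀ ^ (m - n) * s := by group
    have e2 : l₀ ^ (-n) * (l₀ ^ n * s) = s := by group
    rw [e1, e2] at h1
    exact Zdvd _ h1
  have hD : ∀ i : ℤ, ∃ u ∈ Subgroup.closure L, ∃ v ∈ Subgroup.closure R,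
      l₀ ^ i * s = u * s * v :=
    fun i => ⟨l₀ ^ i, zpow_mem (Subgroup.subset_closure hl₀) i, 1, one_mem _, by rw [mul_one]⟩
  refine ⟨?_, ?_, ?_⟩
  · -- part 1
    have hfun : ∀ i : Fin k, {h | WeakConn L R (l₀ ^ ((i : ℕ) : ℤ) * s) h} ∈
        {C : Set G | ∃ g : G, (∃ u ∈ Subgroup.closure L, ∃ v ∈ Subgroup.closure R,
          g = u * s * v) ∧ C = {h | WeakConn L R g h}} :=
      fun i => ⟨l₀ ^ ((i : ℕ) : ℤ) * s, hD _, rfl⟩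
    let f : Fin k → ↥{C : Set G | ∃ g : G, (∃ u ∈ Subgroup.closure L, ∃ v ∈ Subgroup.closure R,
          g = u * s * v) ∧ C = {h | WeakConn L R g h}} :=
      fun i => ⟨{h | WeakConn L R (l₀ ^ ((i : ℕ) : ℤ) * s) h}, hfun i⟩
    have hinj : Function.Injective f := by
      intro i j hij
      have hset : {h | WeakConn L R (l₀ ^ ((i : ℕ) : ℤ) * s) h}
          = {h | WeakConn L R (l₀ ^ ((j : ℕ) : ℤ) * s) h} := congrArg Subtype.val hij
      have hmem : WeakConn L R (l₀ ^ ((j : ℕ) : ℤ) * s) (l₀ ^ ((i : ℕ) : ℤ) * s) := by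
        have h0 : (l₀ ^ ((i : ℕ) : ℤ) * s) ∈ {h | WeakConn L R (l₀ ^ ((i : ℕ) : ℤ) * s) h} :=
          Relation.ReflTransGen.refl
        rw [hset] at h0
        exact h0
      have hdvd := hdvd2 _ _ hmem
      have hne : ((j : ℕ) : ℤ) - ((i : ℕ) : ℤ) = 0 := by
        by_contra hne0
        have h1 : (k : ℤ) ≤ |((j : ℕ) : ℤ) - ((i : ℕ) : ℤ)| :=
          Int.le_of_dvd (abs_pos.mpr hne0) ((dvd_abs _ _).mpr hdvd)
        have h2 : |((j : ℕ) : ℤ) - ((i : ℕ) : ℤ)| < k := by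
          rw [abs_lt]
          have := i.isLt
          have := j.isLt
          omega
        omega
      have : (i : ℕ) = (j : ℕ) := by omega
      exact Fin.ext this
    have hsurj : Function.Surjective f := by
      rintro ⟨C, g, hgD, rfl⟩
      obtain ⟨m, hgm⟩ := exists_normal hl₀ hr₀ s g hgD
      have hkpos' : (0 : ℤ) < (k : ℤ) := by exact_mod_cast kpos
      have hge : 0 ≤ m % (k : ℤ) := Int.emod_nonneg m (by exact_mod_cast kpos.ne')
      have hlt : m % (k : ℤ) < k := Int.emod_lt_of_pos m hkpos'
      have hcast : (((m % (k : ℤ)).toNat : ℕ) : ℤ) = m % (k : ℤ) := Int.toNat_of_nonneg hge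
      refine ⟨⟨(m % (k : ℤ)).toNat, by omega⟩, ?_⟩
      apply Subtype.ext
      show {h | WeakConn L R (l₀ ^ (((m % (k : ℤ)).toNat : ℕ) : ℤ) * s) h} = {h | WeakConn L R g h}
      rw [hcast]
      have hdvdmk : (k : ℤ) ∣ (m - m % (k : ℤ)) :=
        ⟨m / (k : ℤ), by rw [Int.emod_def]; ring⟩
      have h1 : WeakConn L R g (l₀ ^ (m % (k : ℤ)) * s) :=
        weakConn_trans hgm (hcong m (m % (k : ℤ)) hdvdmk)
      exact (classEq h1).symm
    exact ⟨(Equiv.ofBijective f ⟨hinj, hsurj⟩).symm⟩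
  · -- part 2
    ext x
    constructor
    · rintro ⟨C, ⟨g, hgD, rfl⟩, hx⟩
      exact memD_of_weakConn s hx hgD
    · intro hx
      exact ⟨{h | WeakConn L R x h}, ⟨x, hx, rfl⟩, Relation.ReflTransGen.refl⟩
  · -- part 3
    rintro C ⟨g₁, hg₁, rfl⟩ Dd ⟨g₂, hg₂, rfl⟩
    obtain ⟨m₁, h₁⟩ := exists_normal hl₀ hr₀ s g₁ hg₁
    obtain ⟨m₂, h₂⟩ := exists_normal hl₀ hr₀ s g₂ hg₂
    have fwd : ∀ x : G, WeakConn L R g₁ x → WeakConn L R g₂ (l₀ ^ (m₂ - m₁) * x) := by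
      intro x hx
      have ha : WeakConn L R (l₀ ^ m₁ * s) x := weakConn_trans (weakConn_symm h₁) hx
      have hb := transL hl₀ hr₀ (m₂ - m₁) ha
      have e : l₀ ^ (m₂ - m₁) * (l₀ ^ m₁ * s) = l₀ ^ m₂ * s := by group
      rw [e] at hb
      exact weakConn_trans h₂ hb
    have bwd : ∀ x : G, WeakConn L R g₂ x → WeakConn L R g₁ (l₀ ^ (m₁ - m₂) * x) := by
      intro x hx
      have ha : WeakConn L R (l₀ ^ m₂ * s) x := weakConn_trans (weakConn_symm h₂) hx
      have hb := transL hl₀ hr₀ (m₁ - m₂) ha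
      have e : l₀ ^ (m₁ - m₂) * (l₀ ^ m₂ * s) = l₀ ^ m₁ * s := by group
      rw [e] at hb
      exact weakConn_trans h₁ hb
    refine ⟨⟨fun x => ⟨l₀ ^ (m₂ - m₁) * x.1, fwd x.1 x.2⟩,
      fun y => ⟨l₀ ^ (m₁ - m₂) * y.1, bwd y.1 y.2⟩, ?_, ?_⟩⟩
    · intro x
      apply Subtype.ext
      show l₀ ^ (m₁ - m₂) * (l₀ ^ (m₂ - m₁) * x.1) = x.1
      group
    · intro y
      apply Subtype.ext
      show l₀ ^ (m₂ - m₁) * (l₀ ^ (m₁ - m₂) * y.1) = y.1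
      group
end

section
/- Suppose W(L) and W(R) are subgroups of G. Then the set U = {(u,v) : u is a word in L of length n and v is a word in R of length n, for some n ≥ 1} is a subgroup of G × G, and the map G × U → G sending (g, (u,v)) ↦ u⁻¹gv is a right group action of U on G; the orbits of this action are exactly the strongly connected components of 2S(G;L,R). -/
open Relation

section Helpers

variable {G : Type*} [Group G]

lemma isWord_mul {S : Set G} {m n : ℕ} {u v : G} (hu : IsWord S m u) (hv : IsWord S n v) :
    IsWord S (m + n) (u * v) := by
  obtain ⟨l1, h1, h1', h1''⟩ := hu
  obtain ⟨l2, h2, h2', h2''⟩ := hv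
  refine ⟨l1 ++ l2, by simp [h1, h2], ?_, by simp [List.prod_append, h1'', h2'']⟩
  intro x hx
  rcases List.mem_append.1 hx with h | h
  exacts [h1' x h, h2' x h]

lemma isWord_singleton {S : Set G} {s : G} (hs : s ∈ S) : IsWord S 1 s :=
  ⟨[s], rfl, by simpa using hs, by simp⟩

lemma isWord_pad {S : Set G} {a c : ℕ} {x : G} (hx : IsWord S a x) (h1 : IsWord S c (1 : G)) :
    ∀ t, IsWord S (a + t * c) x := by
  intro t
  induction t with
  | zero => simpa using hx
  | succ t ih =>
      have := isWord_mul ih h1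
      have heq : a + t * c + c = a + (t + 1) * c := by ring
      rw [heq, mul_one] at this
      exact this

lemma one_word {S : Set G} (hS : S.Nonempty) (hW : ∃ H : Subgroup G, WordSet S = (H : Set G)) :
    ∃ p : ℕ, 0 < p ∧ IsWord S p (1 : G) := by
  obtain ⟨s, hs⟩ := hS
  obtain ⟨H, hH⟩ := hW
  have hsW : s ∈ WordSet S := ⟨1, one_pos, isWord_singleton hs⟩
  have hinv : s⁻¹ ∈ WordSet S := by
    rw [hH] at hsW ⊢
    exact H.inv_mem hsW
  obtain ⟨a, ha, hwa⟩ := hinv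
  refine ⟨1 + a, by omega, ?_⟩
  have := isWord_mul (isWord_singleton hs) hwa
  simpa using this

lemma inv_words {L R : Set G} (hWL : ∃ H : Subgroup G, WordSet L = (H : Set G))
    (hWR : ∃ H : Subgroup G, WordSet R = (H : Set G))
    {n : ℕ} (hn : 0 < n) {u v : G} (hu : IsWord L n u) (hv : IsWord R n v) :
    ∃ N : ℕ, 0 < N ∧ IsWord L N u⁻¹ ∧ IsWord R N v⁻¹ := by
  obtain ⟨HL, hHL⟩ := hWL
  obtain ⟨HR, hHR⟩ := hWR
  have huW : u ∈ WordSet L := ⟨n, hn, hu⟩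
  have hvW : v ∈ WordSet R := ⟨n, hn, hv⟩
  have huinv : u⁻¹ ∈ WordSet L := by rw [hHL] at huW ⊢; exact HL.inv_mem huW
  have hvinv : v⁻¹ ∈ WordSet R := by rw [hHR] at hvW ⊢; exact HR.inv_mem hvW
  obtain ⟨a, ha, hwa⟩ := huinv
  obtain ⟨b, hb, hwb⟩ := hvinv
  have h1L : IsWord L (n + a) (1 : G) := by
    have := isWord_mul hu hwa; simpa using this
  have h1R : IsWord R (n + b) (1 : G) := by
    have := isWord_mul hv hwb; simpa using this
  obtain ⟨m, rfl⟩ : ∃ m, n = m + 1 := ⟨n - 1, by omega⟩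
  refine ⟨a + (m + b) * (m + 1 + a), by omega, ?_, ?_⟩
  · exact isWord_pad hwa h1L (m + b)
  · have heq : a + (m + b) * (m + 1 + a) = b + (m + a) * (m + 1 + b) := by ring
    rw [heq]
    exact isWord_pad hwb h1R (m + a)

lemma dpath_of_words {L R : Set G} :
    ∀ (lu lv : List G) (g : G), lu.length = lv.length → (∀ x ∈ lu, x ∈ L) →
      (∀ x ∈ lv, x ∈ R) → DPath L R g (lu.prod⁻¹ * g * lv.prod)
  | [], [], g, _, _, _ => by simp only [List.prod_nil, inv_one, one_mul, mul_one]; exact ReflTransGen.refl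
  | [], _ :: _, _, h, _, _ => by simp at h
  | _ :: _, [], _, h, _, _ => by simp at h
  | l :: lu, r :: lv, g, hlen, hLm, hRm => by
      have harc : Arc L R g (l⁻¹ * g * r) :=
        ⟨l, hLm l (by simp), r, hRm r (by simp), rfl⟩
      have ih := dpath_of_words lu lv (l⁻¹ * g * r) (by simpa using hlen)
        (fun x hx => hLm x (by simp [hx])) (fun x hx => hRm x (by simp [hx]))
      have heq : ((l :: lu).prod)⁻¹ * g * (r :: lv).prod =
          lu.prod⁻¹ * (l⁻¹ * g * r) * lv.prod := by
        simp only [List.prod_cons, mul_inv_rev]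
        group
      rw [heq]
      exact ReflTransGen.head harc ih

lemma dpath_orbit {L R : Set G} {g h : G} (hp : DPath L R g h) :
    g = h ∨ ∃ n u v, 0 < n ∧ IsWord L n u ∧ IsWord R n v ∧ h = u⁻¹ * g * v := by
  induction hp with
  | refl => exact Or.inl rfl
  | tail hgb harc ih =>
      obtain ⟨l, hl, r, hr, rfl⟩ := harc
      rcases ih with rfl | ⟨n, u, v, hn, hu, hv, rfl⟩
      · exact Or.inr ⟨1, l, r, one_pos, isWord_singleton hl, isWord_singleton hr, rfl⟩
      · exact Or.inr ⟨n + 1, u * l, v * r, by omega,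
          isWord_mul hu (isWord_singleton hl), isWord_mul hv (isWord_singleton hr), by group⟩

lemma exists_subgroup_of_closed {G : Type*} [Group G] (S : Set G)
    (h1 : (1 : G) ∈ S) (hmul : ∀ a b : G, a ∈ S → b ∈ S → a * b ∈ S)
    (hinv : ∀ a : G, a ∈ S → a⁻¹ ∈ S) : ∃ H : Subgroup G, S = (H : Set G) :=
  ⟨{ carrier := S, one_mem' := h1, mul_mem' := fun ha hb => hmul _ _ ha hb,
     inv_mem' := fun ha => hinv _ ha }, rfl⟩

end Helpers

theorem stmt_14 {G : Type*} [Group G] (L R : Set G) (hL : L.Nonempty) (hR : R.Nonempty)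
    (hWL : ∃ H : Subgroup G, WordSet L = (H : Set G))
    (hWR : ∃ H : Subgroup G, WordSet R = (H : Set G))
    (U : Set (G × G))
    (hU : U = {p : G × G | ∃ n : ℕ, 0 < n ∧ IsWord L n p.1 ∧ IsWord R n p.2}) :
    (∃ H : Subgroup (G × G), U = (H : Set (G × G))) ∧
    (∀ g : G, ∀ p q : G × G, (p.1 * q.1)⁻¹ * g * (p.2 * q.2) =
        q.1⁻¹ * (p.1⁻¹ * g * p.2) * q.2) ∧
    (∀ g : G, ((1 : G), (1 : G)).1⁻¹ * g * ((1 : G), (1 : G)).2 = g) ∧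
    (∀ g h : G, (∃ p ∈ U, h = p.1⁻¹ * g * p.2) ↔ StrongConn L R g h) := by
  obtain ⟨pL, hpL, h1L⟩ := one_word hL hWL
  obtain ⟨pR, hpR, h1R⟩ := one_word hR hWR
  subst hU
  have h11 : ((1 : G), (1 : G)) ∈
      {p : G × G | ∃ n : ℕ, 0 < n ∧ IsWord L n p.1 ∧ IsWord R n p.2} := by
    obtain ⟨p', rfl⟩ : ∃ p', pL = p' + 1 := ⟨pL - 1, by omega⟩
    obtain ⟨q', rfl⟩ : ∃ q', pR = q' + 1 := ⟨pR - 1, by omega⟩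
    refine ⟨(p' + 1) + q' * (p' + 1), by omega, isWord_pad h1L h1L q', ?_⟩
    have heq : (p' + 1) + q' * (p' + 1) = (q' + 1) + p' * (q' + 1) := by ring
    rw [heq]
    exact isWord_pad h1R h1R p'
  refine ⟨?_, fun g p q => by group, fun g => by group, ?_⟩
  · refine exists_subgroup_of_closed _ h11 ?_ ?_
    · rintro ⟨u, v⟩ ⟨u', v'⟩ ⟨n, hn, hu, hv⟩ ⟨n', hn', hu', hv'⟩
      exact ⟨n + n', by omega, isWord_mul hu hu', isWord_mul hv hv'⟩
    · rintro ⟨u, v⟩ ⟨n, hn, hu, hv⟩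
      obtain ⟨N, hN, hu', hv'⟩ := inv_words hWL hWR hn hu hv
      exact ⟨N, hN, hu', hv'⟩
  · intro g h
    constructor
    · rintro ⟨⟨u, v⟩, ⟨n, hn, hu, hv⟩, rfl⟩
      constructor
      · obtain ⟨lu, hlen, hmem, hprod⟩ := hu
        obtain ⟨lv, hlen', hmem', hprod'⟩ := hv
        have := dpath_of_words lu lv g (by omega) hmem hmem'
        rw [hprod, hprod'] at this
        exact this
      · obtain ⟨N, hN, hu', hv'⟩ := inv_words hWL hWR hn hu hv
        obtain ⟨lu, hlen, hmem, hprod⟩ := hu'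
        obtain ⟨lv, hlen', hmem', hprod'⟩ := hv'
        have := dpath_of_words lu lv (u⁻¹ * g * v) (by omega) hmem hmem'
        rw [hprod, hprod'] at this
        have heq : (u⁻¹)⁻¹ * (u⁻¹ * g * v) * v⁻¹ = g := by group
        rwa [heq] at this
    · rintro ⟨hgh, -⟩
      rcases dpath_orbit hgh with rfl | ⟨n, u, v, hn, hu, hv, rfl⟩
      · exact ⟨((1 : G), (1 : G)), h11, by group⟩
      · exact ⟨(u, v), ⟨n, hn, hu, hv⟩, rfl⟩
end
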